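/- In the weak NP-hardness construction for 1||Lex(ΣU_j, T_max): any set 𝒥* of n·(2W/X) + i early jobs all completing by time D*_1 has total processing time at least n·W + Σ_{i₀=1}^{i} i₀·X; and if its total processing time is less than n·W + Σ_{i₀=1}^{i} i₀·X + 0.5·X, then 𝒥* contains exactly one of J*_{i₀} and ¬J*_{i₀} for each i₀ ∈ [i] together with all n·(2W/X) filler jobs. -/

import Mathlib

/-- The jobs of the weak NP-hardness construction: for each `i ∈ [n]` (represented
by `i : Fin n`, encoding index `i.val + 1`) a job `J*_i`, its counterpart `¬J*_i`,
`fc = 2W/X` filler jobs `F_i`, and the long jobs `J_i` and `¬J_i`. -/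
inductive WJob (n fc : ℕ) where
  | star (i : Fin n)
  | nstar (i : Fin n)
  | filler (i : Fin n) (c : Fin fc)
  | big (i : Fin n)
  | nbig (i : Fin n)
  deriving DecidableEq, Fintype

/-- The completion time of job `J` in a schedule `σ` (a bijection from jobs to
positions): the sum of the processing times of all jobs at positions up to and
including the position of `J`. -/
def wCompletion {n fc : ℕ} (p : WJob n fc → ℕ)
    (σ : WJob n fc ≃ Fin (Fintype.card (WJob n fc))) (J : WJob n fc) : ℕ :=
  ∑ J' ∈ Finset.univ.filter (fun J' => σ J' ≤ σ J), p J'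

namespace S13
open Finset

variable {n fc : ℕ}

def sdx : WJob n fc → ℕ
  | .star i0 => i0.val + 1
  | .nstar i0 => i0.val + 1
  | .filler i0 _ => i0.val + 1
  | .big _ => 0
  | .nbig _ => 0

def isS : WJob n fc → Bool
  | .star _ => true
  | .nstar _ => true
  | _ => false

def isF : WJob n fc → Bool
  | .filler _ _ => true
  | _ => false

lemma sdx_pos_of_isS {J : WJob n fc} (h : isS J = true) : 1 ≤ sdx J := by
  cases J <;> simp [isS, sdx] at h ⊢

lemma sdx_pos_of_isF {J : WJob n fc} (h : isF J = true) : 1 ≤ sdx J := by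
  cases J <;> simp [isF, sdx] at h ⊢

lemma sdx_le_n_of_isS {J : WJob n fc} (h : isS J = true) : sdx J ≤ n := by
  cases J with
  | star i0 => simp only [sdx]; exact i0.2
  | nstar i0 => simp only [sdx]; exact i0.2
  | _ => simp [isS] at h

def Sm (𝒥 : Finset (WJob n fc)) (m : ℕ) : Finset (WJob n fc) :=
  𝒥.filter (fun J => isS J = true ∧ sdx J ≤ m)

def Fm (𝒥 : Finset (WJob n fc)) (m : ℕ) : Finset (WJob n fc) :=
  𝒥.filter (fun J => isF J = true ∧ sdx J ≤ m)

def cc (𝒥 : Finset (WJob n fc)) (m : ℕ) : ℕ := (Sm 𝒥 m).card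
def gg (𝒥 : Finset (WJob n fc)) (m : ℕ) : ℕ := (Fm 𝒥 m).card
def PP (𝒥 : Finset (WJob n fc)) (m : ℕ) : ℕ := ∑ J ∈ Sm 𝒥 m, sdx J
def tt (𝒥 : Finset (WJob n fc)) (m k : ℕ) : ℕ :=
  (𝒥.filter (fun J => isS J = true ∧ k ≤ sdx J ∧ sdx J ≤ m)).card

lemma gauss : ∀ m : ℕ, 2 * (∑ k ∈ Icc 1 m, k) = m * (m + 1) := by
  intro m
  induction m with
  | zero => simp
  | succ m ih =>
    rw [Finset.sum_Icc_succ_top (by omega)]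
    ring_nf
    ring_nf at ih
    omega

lemma exists_ge_sum (p : WJob n fc → ℕ) (σ : WJob n fc ≃ Fin (Fintype.card (WJob n fc)))
    (A : Finset (WJob n fc)) (hA : A.Nonempty) :
    ∃ J ∈ A, ∑ J' ∈ A, p J' ≤ wCompletion p σ J := by
  obtain ⟨J, hJ, hmax⟩ := A.exists_max_image σ hA
  refine ⟨J, hJ, ?_⟩
  apply Finset.sum_le_sum_of_subset
  intro J' hJ'
  simp only [Finset.mem_filter, Finset.mem_univ, true_and]
  exact hmax J' hJ'

lemma cc_le (𝒥 : Finset (WJob n fc)) (m : ℕ) : cc 𝒥 m ≤ 2 * m := by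
  have h : cc 𝒥 m ≤ ((Icc 1 m) ×ˢ (Finset.univ : Finset Bool)).card := by
    apply Finset.card_le_card_of_injOn
      (fun J => (sdx J, match J with | .star _ => true | _ => false))
    · intro J hJ
      simp only [Sm, Finset.mem_coe, Finset.mem_filter] at hJ
      simp only [Finset.mem_coe, Finset.mem_product, Finset.mem_Icc, Finset.mem_univ, and_true]
      exact ⟨sdx_pos_of_isS hJ.2.1, hJ.2.2⟩
    · intro J1 h1 J2 h2 heq
      simp only [Sm, Finset.coe_filter, Set.mem_setOf_eq] at h1 h2
      cases J1 <;> cases J2 <;> simp_all [isS, sdx, Prod.ext_iff] <;> exact Fin.ext (by omega)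
  simpa [Nat.card_Icc, mul_comm] using h
lemma gg_zero (𝒥 : Finset (WJob n fc)) : gg 𝒥 0 = 0 := by
  unfold gg Fm
  rw [Finset.card_eq_zero, Finset.filter_eq_empty_iff]
  rintro J hJ ⟨hF, hle⟩
  have := sdx_pos_of_isF hF
  omega

lemma gg_chain (𝒥 : Finset (WJob n fc)) {k m : ℕ} (h : k ≤ m) :
    gg 𝒥 m ≤ gg 𝒥 k + (m - k) * fc := by
  have hsub : Fm 𝒥 m ⊆ Fm 𝒥 k ∪ 𝒥.filter (fun J => isF J = true ∧ k < sdx J ∧ sdx J ≤ m) := by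
    intro J hJ
    simp only [Fm, Finset.mem_union, Finset.mem_filter] at hJ ⊢
    obtain ⟨hJ𝒥, hF, hle⟩ := hJ
    by_cases hk : sdx J ≤ k
    · exact Or.inl ⟨hJ𝒥, hF, hk⟩
    · exact Or.inr ⟨hJ𝒥, hF, by omega, hle⟩
  have hcard2 : (𝒥.filter (fun J => isF J = true ∧ k < sdx J ∧ sdx J ≤ m)).card
      ≤ ((Ioc k m) ×ˢ (Finset.range fc)).card := by
    apply Finset.card_le_card_of_injOn
      (fun J => (sdx J, match J with | .filler _ c => c.val | _ => 0))
    · intro J hJ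
      simp only [Finset.mem_coe, Finset.mem_filter] at hJ
      obtain ⟨_, hF, h1, h2⟩ := hJ
      cases J with
      | filler i0 c =>
        simp only [Finset.mem_coe, Finset.mem_product, Finset.mem_Ioc, Finset.mem_range]
        exact ⟨⟨h1, h2⟩, c.2⟩
      | _ => simp [isF] at hF
    · intro J1 h1 J2 h2 heq
      simp only [Finset.coe_filter, Set.mem_setOf_eq] at h1 h2
      cases J1 <;> cases J2 <;> simp_all [isF, sdx, Prod.ext_iff]
      exact ⟨Fin.ext (by omega), Fin.ext (by omega)⟩
  calc gg 𝒥 m ≤ (Fm 𝒥 k).card + (𝒥.filter (fun J => isF J = true ∧ k < sdx J ∧ sdx J ≤ m)).card := by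
        exact le_trans (Finset.card_le_card hsub) (Finset.card_union_le _ _)
    _ ≤ gg 𝒥 k + (m - k) * fc := by
        refine Nat.add_le_add le_rfl ?_
        simpa [Nat.card_Ioc] using hcard2

lemma gg_le (𝒥 : Finset (WJob n fc)) (m : ℕ) : gg 𝒥 m ≤ m * fc := by
  have := gg_chain 𝒥 (Nat.zero_le m)
  simpa [gg_zero] using this

lemma cc_le_tt (𝒥 : Finset (WJob n fc)) (j m : ℕ) :
    cc 𝒥 m ≤ tt 𝒥 m (j + 1) + cc 𝒥 j := by
  have hsub : Sm 𝒥 m ⊆ 𝒥.filter (fun J => isS J = true ∧ j + 1 ≤ sdx J ∧ sdx J ≤ m) ∪ Sm 𝒥 j := by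
    intro J hJ
    simp only [Sm, Finset.mem_union, Finset.mem_filter] at hJ ⊢
    obtain ⟨hJ𝒥, hS, hle⟩ := hJ
    by_cases hk : sdx J ≤ j
    · exact Or.inr ⟨hJ𝒥, hS, hk⟩
    · exact Or.inl ⟨hJ𝒥, hS, by omega, hle⟩
  exact le_trans (Finset.card_le_card hsub) (Finset.card_union_le _ _)

lemma PP_layer (𝒥 : Finset (WJob n fc)) (m : ℕ) :
    PP 𝒥 m = ∑ k ∈ Icc 1 m, tt 𝒥 m k := by
  unfold PP tt
  have h1 : ∀ J ∈ Sm 𝒥 m, sdx J = ∑ k ∈ Icc 1 m, if k ≤ sdx J then 1 else 0 := by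
    intro J hJ
    simp only [Sm, Finset.mem_filter] at hJ
    rw [Finset.sum_ite, Finset.sum_const_zero, add_zero, Finset.sum_const, smul_eq_mul, mul_one]
    have : (Icc 1 m).filter (fun k => k ≤ sdx J) = Icc 1 (sdx J) := by
      ext k
      simp only [Finset.mem_filter, Finset.mem_Icc]
      constructor
      · rintro ⟨⟨h1, h2⟩, h3⟩; exact ⟨h1, h3⟩
      · rintro ⟨h1, h3⟩; exact ⟨⟨h1, le_trans h3 hJ.2.2⟩, h3⟩
    simp [this, Nat.card_Icc]
  rw [Finset.sum_congr rfl h1, Finset.sum_comm]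
  apply Finset.sum_congr rfl
  intro k _
  rw [← Finset.sum_filter, Finset.sum_const, smul_eq_mul, mul_one]
  congr 1
  unfold Sm
  rw [Finset.filter_filter]
  apply Finset.filter_congr
  intro J _
  constructor
  · rintro ⟨⟨hS, hm⟩, hk⟩; exact ⟨hS, hk, hm⟩
  · rintro ⟨hS, hk, hm⟩; exact ⟨⟨hS, hm⟩, hk⟩

lemma tt_one (𝒥 : Finset (WJob n fc)) (m : ℕ) : tt 𝒥 m 1 = cc 𝒥 m := by
  unfold tt cc Sm
  congr 1
  apply Finset.filter_congr
  intro J _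
  constructor
  · rintro ⟨hS, _, hm⟩; exact ⟨hS, hm⟩
  · rintro ⟨hS, hm⟩; exact ⟨hS, sdx_pos_of_isS hS, hm⟩

lemma sdx_le_n_of_isF {J : WJob n fc} (h : isF J = true) : sdx J ≤ n := by
  cases J with
  | filler i0 c => simp only [sdx]; exact i0.2
  | _ => simp [isF] at h

lemma SF_disjoint (𝒥 : Finset (WJob n fc)) (m : ℕ) : Disjoint (Sm 𝒥 m) (Fm 𝒥 m) := by
  rw [Finset.disjoint_left]
  intro J h1 h2
  simp only [Sm, Fm, Finset.mem_filter] at h1 h2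
  cases J <;> simp [isS, isF] at h1 h2 <;> tauto

end S13

open Finset S13 in
set_option maxHeartbeats 2000000 in
/-- Lemma 11 of the paper: any set `𝒥*` of `n·(2W/X) + i` early jobs all completing
by time `D*_1 = n·W + Σ_{i₀=1}^n i₀·X + t` has total processing time at least
`n·W + Σ_{i₀=1}^i i₀·X`; and if the total processing time is less than
`n·W + Σ_{i₀=1}^i i₀·X + X/2` (stated doubled to avoid division), then `𝒥*`
contains exactly one of `J*_{i₀}` and `¬J*_{i₀}` for each `i₀ ∈ [i]`, together with
all filler jobs. -/
theorem stmt13 (n t fc i : ℕ) (ht : 0 < t) (hn : 0 < n) (hi1 : 1 ≤ i) (hin : i ≤ n)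
    (a : Fin n → ℕ) (hapos : ∀ i0, 0 < a i0) (hasum : ∑ i0, a i0 = 2 * t)
    (Z Y X W : ℕ)
    (hZ : Z = 2*t + 1) (hY : Y = (2*t + 1) * Z)
    (hX : X = n * 2^(n+2) * Y) (hW : W = 2 * n^2 * X)
    (hfc : fc * X = 2 * W)
    (p d : WJob n fc → ℕ)
    (hpstar : ∀ i0, p (.star i0) = (i0.val + 1) * X)
    (hpnstar : ∀ i0, p (.nstar i0) = (i0.val + 1) * X + a i0)
    (hpfill : ∀ i0 c, 2 * p (.filler i0 c) = X)
    (hpbig : ∀ i0, p (.big i0) = W + 2^(i0.val + 1) * Y + a i0 * Z)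
    (hpnbig : ∀ i0, p (.nbig i0) = W + 2^(i0.val + 1) * Y)
    (hdstar : ∀ i0, d (.star i0) =
      (i0.val + 1) * W + (∑ i1 ∈ Finset.Icc 1 (i0.val + 1), i1 * X) + t)
    (hdnstar : ∀ i0, d (.nstar i0) =
      i0.val * W + (∑ i1 ∈ Finset.Icc 1 (i0.val + 1), i1 * X) + t)
    (hdfill : ∀ i0 c, d (.filler i0 c) =
      (i0.val + 1) * W + (∑ i1 ∈ Finset.Icc 1 (i0.val + 1), i1 * X) + t)
    (σ : WJob n fc ≃ Fin (Fintype.card (WJob n fc)))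
    (𝒥 : Finset (WJob n fc))
    (hcard : 𝒥.card = n * fc + i)
    (hearly : ∀ J ∈ 𝒥, wCompletion p σ J ≤ d J)
    (hby : ∀ J ∈ 𝒥, wCompletion p σ J ≤ n * W + (∑ i1 ∈ Finset.Icc 1 n, i1 * X) + t) :
    (n * W + ∑ i1 ∈ Finset.Icc 1 i, i1 * X ≤ ∑ J ∈ 𝒥, p J) ∧
    (2 * (∑ J ∈ 𝒥, p J) < 2 * (n * W + ∑ i1 ∈ Finset.Icc 1 i, i1 * X) + X →
      (∀ i0 : Fin n, i0.val + 1 ≤ i → ((WJob.star i0 ∈ 𝒥) ↔ (WJob.nstar i0 ∉ 𝒥))) ∧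
      (∀ i0 c, WJob.filler i0 c ∈ 𝒥)) := by
  -- basic numeric facts
  have hZX : 2 * t + 1 ≤ X := by
    have h1 : 2 * t + 1 ≤ Y := by
      rw [hY, hZ]; exact Nat.le_mul_of_pos_right _ (by omega)
    rw [hX]
    calc 2 * t + 1 ≤ Y := h1
      _ ≤ n * 2 ^ (n + 2) * Y := Nat.le_mul_of_pos_left _
          (Nat.mul_pos hn (Nat.pow_pos (by omega)))
  have hXpos : 0 < X := by omega
  have h2t : 2 * t < X := by omega
  -- p lower bounds
  have hplowS : ∀ J : WJob n fc, isS J = true → 2 * (sdx J * X) ≤ 2 * p J := by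
    intro J hJ
    cases J with
    | star i0 => rw [hpstar]; simp [sdx]
    | nstar i0 => rw [hpnstar]; simp only [sdx]; omega
    | _ => simp [isS] at hJ
  have hpX : ∀ J : WJob n fc, X ≤ 2 * p J := by
    intro J
    have hWX : X ≤ W := by
      rw [hW]; exact Nat.le_mul_of_pos_left _ (by positivity)
    cases J with
    | star i0 => rw [hpstar]; nlinarith [i0.2]
    | nstar i0 => rw [hpnstar]; nlinarith [i0.2]
    | filler i0 c => rw [hpfill]
    | big i0 => rw [hpbig]; omega
    | nbig i0 => rw [hpnbig]; omega
  -- doubling sums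
  have h2sum : ∀ (A : Finset (WJob n fc)), ∑ J ∈ A, 2 * p J = 2 * ∑ J ∈ A, p J :=
    fun A => (Finset.mul_sum _ _ _).symm
  -- lower bound on the doubled processing sum of Sm ∪ Fm
  have hlowM : ∀ m : ℕ, (gg 𝒥 m + 2 * PP 𝒥 m) * X ≤ ∑ J ∈ Sm 𝒥 m ∪ Fm 𝒥 m, 2 * p J := by
    intro m
    rw [Finset.sum_union (SF_disjoint 𝒥 m)]
    have hF : ∑ J ∈ Fm 𝒥 m, 2 * p J = gg 𝒥 m * X := by
      rw [Finset.sum_congr rfl (g := fun _ => X) ?_, Finset.sum_const, smul_eq_mul]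
      · rfl
      · intro J hJ
        simp only [Fm, Finset.mem_filter] at hJ
        cases J with
        | filler i0 c => exact hpfill i0 c
        | _ => simp [isF] at hJ
    have hS : 2 * PP 𝒥 m * X ≤ ∑ J ∈ Sm 𝒥 m, 2 * p J := by
      have h1 : ∑ J ∈ Sm 𝒥 m, 2 * (sdx J * X) ≤ ∑ J ∈ Sm 𝒥 m, 2 * p J := by
        apply Finset.sum_le_sum
        intro J hJ
        simp only [Sm, Finset.mem_filter] at hJ
        exact hplowS J hJ.2.1
      calc 2 * PP 𝒥 m * X = ∑ J ∈ Sm 𝒥 m, 2 * (sdx J * X) := by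
            unfold PP; rw [Finset.mul_sum, Finset.sum_mul]
            apply Finset.sum_congr rfl; intro J _; ring
        _ ≤ _ := h1
    calc (gg 𝒥 m + 2 * PP 𝒥 m) * X = 2 * PP 𝒥 m * X + gg 𝒥 m * X := by ring
      _ ≤ ∑ J ∈ Sm 𝒥 m, 2 * p J + ∑ J ∈ Fm 𝒥 m, 2 * p J := by
          rw [hF]; exact Nat.add_le_add_right hS _
  -- the due-date constraints
  have hC : ∀ m : ℕ, m ≤ n → gg 𝒥 m + 2 * PP 𝒥 m ≤ m * fc + m * (m + 1) := by
    intro m hmn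
    have hCsum : (gg 𝒥 m + 2 * PP 𝒥 m) * X ≤ 2 * (m * W) + (m * (m+1)) * X + 2 * t := by
      rcases Finset.eq_empty_or_nonempty (Sm 𝒥 m ∪ Fm 𝒥 m) with hemp | hne
      · have h0 := hlowM m
        rw [hemp] at h0
        simpa using le_trans h0 (Nat.zero_le _)
      · obtain ⟨J, hJA, hsum⟩ := exists_ge_sum p σ _ hne
        have hJ𝒥 : J ∈ 𝒥 := by
          rcases Finset.mem_union.mp hJA with h | h
          · exact Finset.mem_of_mem_filter J h
          · exact Finset.mem_of_mem_filter J h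
        have hd : d J ≤ m * W + (∑ i1 ∈ Finset.Icc 1 m, i1 * X) + t := by
          have hJA' : (isS J = true ∧ sdx J ≤ m) ∨ (isF J = true ∧ sdx J ≤ m) := by
            rcases Finset.mem_union.mp hJA with h | h
            · exact Or.inl (Finset.mem_filter.mp h).2
            · exact Or.inr (Finset.mem_filter.mp h).2
          have hsub : ∀ k : ℕ, k ≤ m →
              (∑ i1 ∈ Finset.Icc 1 k, i1 * X) ≤ ∑ i1 ∈ Finset.Icc 1 m, i1 * X := by
            intro k hk
            exact Finset.sum_le_sum_of_subset (Finset.Icc_subset_Icc_right hk)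
          cases J with
          | star i0 =>
            have hle : i0.val + 1 ≤ m := by
              rcases hJA' with h | h <;> simpa [sdx] using h.2
            rw [hdstar]
            exact Nat.add_le_add (Nat.add_le_add (Nat.mul_le_mul_right _ hle) (hsub _ hle)) le_rfl
          | nstar i0 =>
            have hle : i0.val + 1 ≤ m := by
              rcases hJA' with h | h <;> simpa [sdx] using h.2
            rw [hdnstar]
            exact Nat.add_le_add (Nat.add_le_add (Nat.mul_le_mul_right _ (by omega)) (hsub _ hle)) le_rfl
          | filler i0 c =>
            have hle : i0.val + 1 ≤ m := by
              rcases hJA' with h | h <;> simpa [sdx] using h.2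
            rw [hdfill]
            exact Nat.add_le_add (Nat.add_le_add (Nat.mul_le_mul_right _ hle) (hsub _ hle)) le_rfl
          | big i0 => simp [isS, isF] at hJA'
          | nbig i0 => simp [isS, isF] at hJA'
        have hIccX : (∑ i1 ∈ Finset.Icc 1 m, i1 * X) * 2 = (m * (m+1)) * X := by
          rw [← Finset.sum_mul, ← gauss m]; ring
        calc (gg 𝒥 m + 2 * PP 𝒥 m) * X ≤ ∑ J' ∈ Sm 𝒥 m ∪ Fm 𝒥 m, 2 * p J' := hlowM m
          _ = 2 * ∑ J' ∈ Sm 𝒥 m ∪ Fm 𝒥 m, p J' := h2sum _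
          _ ≤ 2 * d J := by
              apply Nat.mul_le_mul_left
              exact le_trans hsum (hearly J hJ𝒥)
          _ ≤ 2 * (m * W + (∑ i1 ∈ Finset.Icc 1 m, i1 * X) + t) := Nat.mul_le_mul_left _ hd
          _ = 2 * (m * W) + (m * (m+1)) * X + 2 * t := by rw [← hIccX]; ring
    have h2W : 2 * (m * W) = (m * fc) * X := by
      calc 2 * (m * W) = m * (2 * W) := by ring
        _ = m * (fc * X) := by rw [hfc]
        _ = (m * fc) * X := by ring
    have hlt : (gg 𝒥 m + 2 * PP 𝒥 m) * X < (m * fc + m * (m + 1) + 1) * X := by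
      calc (gg 𝒥 m + 2 * PP 𝒥 m) * X ≤ (m * fc) * X + (m * (m+1)) * X + 2 * t := by
            rw [← h2W]; exact hCsum
        _ < (m * fc + m * (m + 1) + 1) * X := by
            have : (m * fc) * X + (m * (m+1)) * X + X = (m * fc + m * (m + 1) + 1) * X := by ring
            omega
    have := lt_of_mul_lt_mul_right hlt (Nat.zero_le X)
    omega
  -- no big jobs
  have hnobig : ∀ J ∈ 𝒥, isS J = true ∨ isF J = true := by
    intro J hJ
    have hbigcase : ∀ J0 ∈ 𝒥, W ≤ p J0 → False := by
      intro J0 hJ0 hpJ0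
      obtain ⟨J1, hJ1, hsum⟩ := exists_ge_sum p σ 𝒥 ⟨J0, hJ0⟩
      have hup : 2 * ∑ J' ∈ 𝒥, p J' ≤ (n * fc) * X + (n * (n+1)) * X + 2 * t := by
        have h1 : ∑ J' ∈ 𝒥, p J' ≤ n * W + (∑ i1 ∈ Finset.Icc 1 n, i1 * X) + t :=
          le_trans hsum (hby J1 hJ1)
        have hIccX : (∑ i1 ∈ Finset.Icc 1 n, i1 * X) * 2 = (n * (n+1)) * X := by
          rw [← Finset.sum_mul, ← gauss n]; ring
        have h2W : 2 * (n * W) = (n * fc) * X := by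
          calc 2 * (n * W) = n * (2 * W) := by ring
            _ = n * (fc * X) := by rw [hfc]
            _ = (n * fc) * X := by ring
        calc 2 * ∑ J' ∈ 𝒥, p J' ≤ 2 * (n * W + (∑ i1 ∈ Finset.Icc 1 n, i1 * X) + t) :=
              Nat.mul_le_mul_left _ h1
          _ = 2 * (n * W) + (∑ i1 ∈ Finset.Icc 1 n, i1 * X) * 2 + 2 * t := by ring
          _ = (n * fc) * X + (n * (n+1)) * X + 2 * t := by rw [hIccX, h2W]
      have hlo : 2 * W + (n * fc) * X ≤ 2 * ∑ J' ∈ 𝒥, p J' := by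
        rw [← h2sum]
        rw [← Finset.sum_erase_add 𝒥 _ hJ0]
        have hrest : (n * fc) * X ≤ ∑ J' ∈ 𝒥.erase J0, 2 * p J' := by
          calc (n * fc) * X = (n * fc) • X := by rw [smul_eq_mul]
            _ ≤ (𝒥.erase J0).card • X := by
                apply nsmul_le_nsmul_left (Nat.zero_le X)
                rw [Finset.card_erase_of_mem hJ0, hcard]
                omega
            _ = ∑ _J' ∈ 𝒥.erase J0, X := by rw [Finset.sum_const]
            _ ≤ ∑ J' ∈ 𝒥.erase J0, 2 * p J' := Finset.sum_le_sum (fun J' _ => hpX J')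
        omega
      have hWval : 2 * W = (4 * n^2) * X := by rw [hW]; ring
      have hn2 : n * (n + 1) + 1 ≤ 4 * n^2 := by nlinarith
      have : (n * (n+1)) * X + 2 * t < (4 * n^2) * X := by
        calc (n * (n+1)) * X + 2 * t < (n * (n+1)) * X + X := by omega
          _ = (n * (n+1) + 1) * X := by ring
          _ ≤ (4 * n^2) * X := Nat.mul_le_mul_right _ hn2
      omega
    cases J with
    | star i0 => left; rfl
    | nstar i0 => left; rfl
    | filler i0 c => right; rfl
    | big i0 => exfalso; exact hbigcase _ hJ (by rw [hpbig]; omega)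
    | nbig i0 => exfalso; exact hbigcase _ hJ (by rw [hpnbig]; omega)
  -- union decomposition of 𝒥
  have hsplit𝒥 : Sm 𝒥 n ∪ Fm 𝒥 n = 𝒥 := by
    apply Finset.Subset.antisymm
    · intro J hJ
      rcases Finset.mem_union.mp hJ with h | h
      · exact Finset.mem_of_mem_filter J h
      · exact Finset.mem_of_mem_filter J h
    · intro J hJ
      rcases hnobig J hJ with h | h
      · exact Finset.mem_union_left _ (Finset.mem_filter.mpr ⟨hJ, h, sdx_le_n_of_isS h⟩)
      · exact Finset.mem_union_right _ (Finset.mem_filter.mpr ⟨hJ, h, sdx_le_n_of_isF h⟩)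
  have hcount : cc 𝒥 n + gg 𝒥 n = n * fc + i := by
    unfold cc gg
    rw [← Finset.card_union_of_disjoint (SF_disjoint 𝒥 n)]
    rw [hsplit𝒥, hcard]
  -- the invariant
  have hInv : ∀ m, m ≤ n → cc 𝒥 m + gg 𝒥 m ≤ m + m * fc := by
    intro m
    induction m using Nat.strong_induction_on with
    | _ m IH =>
      intro hmn
      by_contra hcon
      push_neg at hcon
      have htk : ∀ k ∈ Finset.Icc 1 m, m + 2 ≤ tt 𝒥 m k + k := by
        intro k hk
        rw [Finset.mem_Icc] at hk
        obtain ⟨j, rfl⟩ : ∃ j, k = j + 1 := ⟨k - 1, by omega⟩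
        have hIH := IH j (by omega) (by omega)
        have hgc : gg 𝒥 m ≤ gg 𝒥 j + (m - j) * fc := gg_chain 𝒥 (by omega)
        have hct : cc 𝒥 m ≤ tt 𝒥 m (j + 1) + cc 𝒥 j := cc_le_tt 𝒥 j m
        have hfc3 : j * fc + (m - j) * fc = m * fc := by
          rw [← Nat.add_mul]; congr 1; omega
        linarith
      have hs1 : ∑ k ∈ Finset.Icc 1 m, (m + 2 - k) ≤ PP 𝒥 m := by
        rw [PP_layer]
        apply Finset.sum_le_sum
        intro k hk
        have := htk k hk
        show m + 2 - k ≤ tt 𝒥 m k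
        omega
      have hs2 : (∑ k ∈ Finset.Icc 1 m, (m + 2 - k)) + (∑ k ∈ Finset.Icc 1 m, k) = m * (m + 2) := by
        rw [← Finset.sum_add_distrib]
        rw [Finset.sum_congr rfl (g := fun _ => m + 2) ?_, Finset.sum_const, smul_eq_mul]
        · rw [Nat.card_Icc]; rfl
        · intro k hk
          rw [Finset.mem_Icc] at hk
          show (m + 2 - k) + k = m + 2
          omega
      have hgauss := gauss m
      have hCm := hC m hmn
      have hcl := cc_le 𝒥 m
      have hrel : m * (m + 2) = m * (m + 1) + m := by ring
      linarith
  obtain ⟨j, rfl⟩ : ∃ j, i = j + 1 := ⟨i - 1, by omega⟩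
  -- bounds on the layer counts at level n
  have htkn : ∀ k ∈ Finset.Icc 2 n, j + 2 ≤ tt 𝒥 n k + k := by
    intro k hk
    rw [Finset.mem_Icc] at hk
    obtain ⟨j', rfl⟩ : ∃ j', k = j' + 1 := ⟨k - 1, by omega⟩
    have hIH := hInv j' (by omega)
    have hgc : gg 𝒥 n ≤ gg 𝒥 j' + (n - j') * fc := gg_chain 𝒥 (by omega)
    have hct : cc 𝒥 n ≤ tt 𝒥 n (j' + 1) + cc 𝒥 j' := cc_le_tt 𝒥 j' n
    have hfc3 : j' * fc + (n - j') * fc = n * fc := by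
      rw [← Nat.add_mul]; congr 1; omega
    linarith
  have hPsplit : PP 𝒥 n = cc 𝒥 n + ∑ k ∈ Finset.Icc 2 n, tt 𝒥 n k := by
    rw [PP_layer]
    have hins : Finset.Icc 1 n = insert 1 (Finset.Icc 2 n) := by
      ext x
      simp only [Finset.mem_Icc, Finset.mem_insert]
      omega
    rw [hins, Finset.sum_insert (by simp), tt_one]
  have hslb : ∑ k ∈ Finset.Icc 2 n, (j + 2 - k) ≤ ∑ k ∈ Finset.Icc 2 n, tt 𝒥 n k := by
    apply Finset.sum_le_sum
    intro k hk
    have := htkn k hk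
    show j + 2 - k ≤ tt 𝒥 n k
    omega
  have hsv : 2 * (∑ k ∈ Finset.Icc 2 n, (j + 2 - k)) = j * (j + 1) := by
    have hsub : ∑ k ∈ Finset.Icc 2 (j + 1), (j + 2 - k) = ∑ k ∈ Finset.Icc 2 n, (j + 2 - k) := by
      apply Finset.sum_subset (Finset.Icc_subset_Icc_right (by omega))
      intro x hx hnx
      rw [Finset.mem_Icc] at hx
      rw [Finset.mem_Icc] at hnx
      omega
    rw [← hsub]
    have hA : (∑ k ∈ Finset.Icc 2 (j + 1), (j + 2 - k)) + (∑ k ∈ Finset.Icc 2 (j + 1), k)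
        = j * (j + 2) := by
      rw [← Finset.sum_add_distrib]
      rw [Finset.sum_congr rfl (g := fun _ => j + 2) ?_, Finset.sum_const, smul_eq_mul]
      · rw [Nat.card_Icc]
        have he : j + 1 + 1 - 2 = j := by omega
        rw [he]
      · intro k hk
        rw [Finset.mem_Icc] at hk
        show (j + 2 - k) + k = j + 2
        omega
    have hB : 1 + (∑ k ∈ Finset.Icc 2 (j + 1), k) = ∑ k ∈ Finset.Icc 1 (j + 1), k := by
      have hins : Finset.Icc 1 (j + 1) = insert 1 (Finset.Icc 2 (j + 1)) := by
        ext x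
        simp only [Finset.mem_Icc, Finset.mem_insert]
        omega
      rw [hins, Finset.sum_insert (by simp)]
    have hG := gauss (j + 1)
    have e1 : j * (j + 2) = j * (j + 1) + j := by ring
    have e2 : (j + 1) * (j + 1 + 1) = j * (j + 1) + 2 * j + 2 := by ring
    linarith
  -- the main lower bound on gg + 2 PP at level n
  have hmain : n * fc + (j + 1) * (j + 2) ≤ gg 𝒥 n + 2 * PP 𝒥 n := by
    have hgle := gg_le 𝒥 n
    have e3 : (j + 1) * (j + 2) = j * (j + 1) + 2 * (j + 1) := by ring
    linarith
  -- the doubled total processing time bounds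
  have hplower : (gg 𝒥 n + 2 * PP 𝒥 n) * X ≤ 2 * ∑ J ∈ 𝒥, p J := by
    calc (gg 𝒥 n + 2 * PP 𝒥 n) * X ≤ ∑ J ∈ Sm 𝒥 n ∪ Fm 𝒥 n, 2 * p J := hlowM n
      _ = 2 * ∑ J ∈ 𝒥, p J := by rw [hsplit𝒥, h2sum]
  have hIccXi : 2 * (∑ i1 ∈ Finset.Icc 1 (j+1), i1 * X) = ((j + 1) * (j + 2)) * X := by
    rw [← Finset.sum_mul]
    have := gauss (j + 1)
    calc 2 * ((∑ i1 ∈ Finset.Icc 1 (j+1), i1) * X) = (2 * ∑ i1 ∈ Finset.Icc 1 (j+1), i1) * X := by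
          ring
      _ = ((j + 1) * (j + 2)) * X := by rw [this]
  have h2W : 2 * (n * W) = (n * fc) * X := by
    calc 2 * (n * W) = n * (2 * W) := by ring
      _ = n * (fc * X) := by rw [hfc]
      _ = (n * fc) * X := by ring
  have hgoal2 : 2 * (n * W + ∑ i1 ∈ Finset.Icc 1 (j+1), i1 * X)
      = (n * fc + (j + 1) * (j + 2)) * X := by
    calc 2 * (n * W + ∑ i1 ∈ Finset.Icc 1 (j+1), i1 * X)
        = 2 * (n * W) + 2 * (∑ i1 ∈ Finset.Icc 1 (j+1), i1 * X) := by ring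
      _ = (n * fc) * X + ((j + 1) * (j + 2)) * X := by rw [h2W, hIccXi]
      _ = (n * fc + (j + 1) * (j + 2)) * X := by ring
  constructor
  · -- part 1
    have : 2 * (n * W + ∑ i1 ∈ Finset.Icc 1 (j+1), i1 * X) ≤ 2 * ∑ J ∈ 𝒥, p J := by
      rw [hgoal2]
      calc (n * fc + (j + 1) * (j + 2)) * X ≤ (gg 𝒥 n + 2 * PP 𝒥 n) * X :=
            Nat.mul_le_mul_right _ hmain
        _ ≤ 2 * ∑ J ∈ 𝒥, p J := hplower
    omega
  · -- part 2
    intro h2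
    have hupper : gg 𝒥 n + 2 * PP 𝒥 n ≤ n * fc + (j + 1) * (j + 2) := by
      have hlt : (gg 𝒥 n + 2 * PP 𝒥 n) * X < (n * fc + (j + 1) * (j + 2) + 1) * X := by
        calc (gg 𝒥 n + 2 * PP 𝒥 n) * X ≤ 2 * ∑ J ∈ 𝒥, p J := hplower
          _ < 2 * (n * W + ∑ i1 ∈ Finset.Icc 1 (j+1), i1 * X) + X := h2
          _ = (n * fc + (j + 1) * (j + 2) + 1) * X := by rw [hgoal2]; ring
      have := lt_of_mul_lt_mul_right hlt (Nat.zero_le X)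
      omega
    have hgle := gg_le 𝒥 n
    have e3 : (j + 1) * (j + 2) = j * (j + 1) + 2 * (j + 1) := by ring
    have hccn : cc 𝒥 n = j + 1 := by
      have h1 : cc 𝒥 n ≤ j + 1 := by linarith
      have h2 : j + 1 ≤ cc 𝒥 n := by linarith
      omega
    have hggn : gg 𝒥 n = n * fc := by
      have := hcount
      omega
    -- all fillers are present
    have hfcpos : 0 < fc := by
      rcases Nat.eq_zero_or_pos fc with h | h
      · exfalso
        rw [h, Nat.zero_mul] at hfc
        have hWpos : 0 < W := by
          rw [hW]; positivity
        omega
      · exact h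
    have hallfill : ∀ (i0 : Fin n) (c : Fin fc), WJob.filler i0 c ∈ 𝒥 := by
      by_contra hcf
      push_neg at hcf
      obtain ⟨i0, c, hnc⟩ := hcf
      have hinj : Function.Injective (fun x : Fin n × Fin fc => WJob.filler (n := n) x.1 x.2) := by
        intro x y hxy
        simp only [WJob.filler.injEq] at hxy
        exact Prod.ext hxy.1 hxy.2
      have himgcard : ((Finset.univ : Finset (Fin n × Fin fc)).image
          (fun x => WJob.filler x.1 x.2)).card = n * fc := by
        rw [Finset.card_image_of_injective _ hinj]
        simp
      have hmem : WJob.filler i0 c ∈ (Finset.univ : Finset (Fin n × Fin fc)).image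
          (fun x => WJob.filler x.1 x.2) :=
        Finset.mem_image.mpr ⟨(i0, c), Finset.mem_univ _, rfl⟩
      have hsubE : Fm 𝒥 n ⊆ ((Finset.univ : Finset (Fin n × Fin fc)).image
          (fun x => WJob.filler x.1 x.2)).erase (WJob.filler i0 c) := by
        intro J hJ
        simp only [Fm, Finset.mem_filter] at hJ
        obtain ⟨hJ𝒥, hF, _⟩ := hJ
        cases J with
        | filler i1 c1 =>
          rw [Finset.mem_erase]
          constructor
          · intro heq
            rw [heq] at hJ𝒥
            exact hnc hJ𝒥
          · exact Finset.mem_image.mpr ⟨(i1, c1), Finset.mem_univ _, rfl⟩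
        | _ => simp [isF] at hF
      have hgg1 : gg 𝒥 n ≤ n * fc - 1 := by
        have := Finset.card_le_card hsubE
        rw [Finset.card_erase_of_mem hmem, himgcard] at this
        exact this
      have hnfcpos : 0 < n * fc := Nat.mul_pos hn hfcpos
      rw [hggn] at hgg1
      exact absurd hgg1 (by omega)
    refine ⟨?_, hallfill⟩
    -- the filler counts are full at every level
    have hgfull : ∀ m, m ≤ n → m * fc ≤ gg 𝒥 m := by
      intro m hmn
      have h := Finset.card_le_card_of_injOn
        (f := fun x : ℕ × Fin fc => WJob.filler (⟨x.1 % n, Nat.mod_lt _ hn⟩ : Fin n) x.2)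
        (s := (Finset.range m) ×ˢ (Finset.univ : Finset (Fin fc)))
        (t := Fm 𝒥 m) ?_ ?_
      · simpa [gg] using h
      · intro x hx
        rw [Finset.mem_coe, Finset.mem_product, Finset.mem_range] at hx
        have hxm : x.1 % n = x.1 := Nat.mod_eq_of_lt (by omega)
        rw [Finset.mem_coe]
        refine Finset.mem_filter.mpr ⟨hallfill _ _, rfl, ?_⟩
        show x.1 % n + 1 ≤ m
        omega
      · intro x hx y hy hxy
        simp only [Finset.coe_product, Set.mem_prod, Finset.mem_coe, Finset.mem_range] at hx hy
        simp only [WJob.filler.injEq, Fin.mk.injEq] at hxy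
        have hx1 : x.1 % n = x.1 := Nat.mod_eq_of_lt (by omega)
        have hy1 : y.1 % n = y.1 := Nat.mod_eq_of_lt (by omega)
        ext
        · omega
        · exact Fin.val_eq_of_eq hxy.2
    have hccle : ∀ m, m ≤ n → cc 𝒥 m ≤ m := by
      intro m hmn
      have h1 := hInv m hmn
      have h2 := hgfull m hmn
      omega
    -- lower bound on prefix counts
    have hccge : ∀ m, m ≤ j + 1 → m ≤ cc 𝒥 m := by
      intro m hm
      rcases Nat.eq_zero_or_pos m with rfl | hmpos
      · exact Nat.zero_le _
      by_contra hlt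
      push_neg at hlt
      rcases eq_or_lt_of_le (le_trans hm hin) with heq | hmn
      · have : m = n := heq
        rw [this, hccn] at hlt
        omega
      · have hstrict : ∑ k ∈ Finset.Icc 2 n, (j + 2 - k) < ∑ k ∈ Finset.Icc 2 n, tt 𝒥 n k := by
          apply Finset.sum_lt_sum
          · intro k hk
            have := htkn k hk
            show j + 2 - k ≤ tt 𝒥 n k
            omega
          · refine ⟨m + 1, Finset.mem_Icc.mpr ⟨by omega, by omega⟩, ?_⟩
            have hct : cc 𝒥 n ≤ tt 𝒥 n (m + 1) + cc 𝒥 m := cc_le_tt 𝒥 m n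
            rw [hccn] at hct
            show j + 2 - (m + 1) < tt 𝒥 n (m + 1)
            omega
        have e3 : (j + 1) * (j + 2) = j * (j + 1) + 2 * (j + 1) := by ring
        have : n * fc + (j + 1) * (j + 2) + 2 ≤ gg 𝒥 n + 2 * PP 𝒥 n := by
          linarith [hccn, hggn]
        linarith
    intro i0 hi0
    -- exactly one of star/nstar at each index up to i
    have hk1 : cc 𝒥 (i0.val + 1) = i0.val + 1 :=
      le_antisymm (hccle _ (by omega)) (hccge _ (by omega))
    have hk0 : cc 𝒥 i0.val = i0.val :=
      le_antisymm (hccle _ (by omega)) (hccge _ (by omega))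
    set B := 𝒥.filter (fun J => isS J = true ∧ sdx J = i0.val + 1) with hB
    have hSmsplit : Sm 𝒥 (i0.val + 1) = Sm 𝒥 i0.val ∪ B := by
      ext J
      simp only [Sm, hB, Finset.mem_union, Finset.mem_filter]
      constructor
      · rintro ⟨hJ, hS, hle⟩
        by_cases h : sdx J ≤ i0.val
        · exact Or.inl ⟨hJ, hS, h⟩
        · exact Or.inr ⟨hJ, hS, by omega⟩
      · rintro (⟨hJ, hS, hle⟩ | ⟨hJ, hS, heq⟩)
        · exact ⟨hJ, hS, by omega⟩
        · exact ⟨hJ, hS, by omega⟩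
    have hdisj : Disjoint (Sm 𝒥 i0.val) B := by
      rw [Finset.disjoint_left]
      intro J h1 h2
      simp only [Sm, Finset.mem_filter] at h1
      simp only [hB, Finset.mem_filter] at h2
      omega
    have hBcard : B.card = 1 := by
      have : cc 𝒥 (i0.val + 1) = cc 𝒥 i0.val + B.card := by
        unfold cc
        rw [hSmsplit, Finset.card_union_of_disjoint hdisj]
      omega
    obtain ⟨x, hx⟩ := Finset.card_eq_one.mp hBcard
    have hxB : x ∈ B := by rw [hx]; exact Finset.mem_singleton_self x
    have hBchar : ∀ J ∈ B, (J = WJob.star i0 ∨ J = WJob.nstar i0) ∧ J ∈ 𝒥 := by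
      intro J hJ
      simp only [hB, Finset.mem_filter] at hJ
      obtain ⟨hJ𝒥, hS, heq⟩ := hJ
      refine ⟨?_, hJ𝒥⟩
      cases J with
      | star i1 =>
        left
        have : i1.val + 1 = i0.val + 1 := heq
        congr 1
        exact Fin.ext (by omega)
      | nstar i1 =>
        right
        have : i1.val + 1 = i0.val + 1 := heq
        congr 1
        exact Fin.ext (by omega)
      | _ => simp [isS] at hS
    have hstarB : WJob.star i0 ∈ 𝒥 → WJob.star i0 ∈ B := by
      intro h
      simp only [hB, Finset.mem_filter]
      exact ⟨h, rfl, rfl⟩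
    have hnstarB : WJob.nstar i0 ∈ 𝒥 → WJob.nstar i0 ∈ B := by
      intro h
      simp only [hB, Finset.mem_filter]
      exact ⟨h, rfl, rfl⟩
    constructor
    · intro hstar hnstar
      have h1 : WJob.star i0 = x := by
        have := hstarB hstar
        rw [hx] at this
        exact Finset.mem_singleton.mp this
      have h2 : WJob.nstar i0 = x := by
        have := hnstarB hnstar
        rw [hx] at this
        exact Finset.mem_singleton.mp this
      rw [← h2] at h1
      cases h1
    · intro hnstar
      obtain ⟨hor, hx𝒥⟩ := hBchar x hxB
      rcases hor with h | h
      · rw [← h]; exact hx𝒥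
      · rw [h] at hx𝒥
        exact absurd hx𝒥 hnstar
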